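/- arXiv:2502.06391 — 3 statements merged into one kernel-verified Lean document; each statement's English description precedes it below -/
import Mathlib

section
/- If T solves the ODE T'(s) = f(s)·max(0, (T_max - T(s))/(T_max - T_0)) on [0,S] with T(0) = T_0 < T_max and f continuous and nonnegative, then T(s) < T_max for all s in [0,S]. -/
/-- Adiabatic linear heating model (6): the temperature stays below `Tmax`. -/
theorem stmt_0 (T0 Tmax S : ℝ) (hT : T0 < Tmax) (hS : 0 < S)
    (f : ℝ → ℝ) (hf : ContinuousOn f (Set.Icc 0 S))
    (hf0 : ∀ s ∈ Set.Icc 0 S, 0 ≤ f s)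
    (T : ℝ → ℝ)
    (hode : ∀ s ∈ Set.Icc 0 S,
      HasDerivAt T (f s * max 0 ((Tmax - T s) / (Tmax - T0))) s)
    (hinit : T 0 = T0) :
    ∀ s ∈ Set.Icc 0 S, T s < Tmax := by
  set D := Tmax - T0 with hD
  have hD0 : 0 < D := by simp only [hD]; linarith
  obtain ⟨C, hC⟩ :=
    (isCompact_Icc : IsCompact (Set.Icc (0:ℝ) S)).exists_bound_of_continuousOn hf
  have hC0 : 0 ≤ C := le_trans (norm_nonneg _) (hC 0 ⟨le_refl 0, hS.le⟩)
  set K := C / D with hK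
  set g : ℝ → ℝ := fun s => Tmax - T s with hg
  have hg' : ∀ u ∈ Set.Icc 0 S,
      HasDerivAt g (-(f u * max 0 (g u / D))) u := fun u hu => (hode u hu).const_sub Tmax
  have hgcont : ContinuousOn g (Set.Icc 0 S) := fun u hu =>
    ((hg' u hu).continuousAt).continuousWithinAt
  have hbound : ∀ u ∈ Set.Icc 0 S, |(-(f u * max 0 (g u / D)))| ≤ K * |g u| := by
    intro u hu
    rw [abs_neg, abs_of_nonneg (mul_nonneg (hf0 u hu) (le_max_left _ _))]
    have h1 : max 0 (g u / D) ≤ |g u| / D := by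
      apply max_le (by positivity)
      calc g u / D ≤ |g u / D| := le_abs_self _
        _ = |g u| / D := by rw [abs_div, abs_of_pos hD0]
    have h2 : f u ≤ C := le_trans (le_abs_self _) (hC u hu)
    calc f u * max 0 (g u / D) ≤ C * (|g u| / D) :=
          mul_le_mul h2 h1 (le_max_left _ _) hC0
      _ = K * |g u| := by rw [hK]; ring
  by_contra hcon
  push_neg at hcon
  obtain ⟨t, ht, htT⟩ := hcon
  have hg0 : 0 < g 0 := by simp only [hg, hinit]; linarith
  have hgt : g t ≤ 0 := by simp only [hg]; linarith
  have hsub : Set.Icc 0 t ⊆ Set.Icc 0 S := Set.Icc_subset_Icc le_rfl ht.2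
  obtain ⟨c, hc, hgc0⟩ :=
    intermediate_value_Icc' ht.1 (hgcont.mono hsub) ⟨hgt, hg0.le⟩
  have hc1 : c ∈ Set.Icc 0 S := hsub hc
  have hmaps : ∀ x ∈ Set.Icc (0:ℝ) c, c - x ∈ Set.Icc 0 S := by
    intro x hx
    exact ⟨by linarith [hx.2], by linarith [hx.1, hc1.2]⟩
  have key : ∀ x ∈ Set.Icc 0 c,
      ‖g (c - x)‖ ≤ gronwallBound 0 K 0 (x - 0) := by
    apply norm_le_gronwallBound_of_norm_deriv_right_le
      (f' := fun x => -(f (c - x) * max 0 (g (c - x) / D)) * (-1))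
    · exact hgcont.comp ((continuous_const.sub continuous_id).continuousOn) hmaps
    · intro x hx
      have hx' : c - x ∈ Set.Icc 0 S := hmaps x ⟨hx.1, hx.2.le⟩
      exact (((hg' (c - x) hx').comp x
        ((hasDerivAt_id x).const_sub c))).hasDerivWithinAt
    · simp [hgc0]
    · intro x hx
      have hx' : c - x ∈ Set.Icc 0 S := hmaps x ⟨hx.1, hx.2.le⟩
      have := hbound (c - x) hx'
      simpa [abs_mul, Real.norm_eq_abs] using this
  have hfin := key c ⟨hc.1, le_rfl⟩
  rw [sub_self, gronwallBound_ε0] at hfin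
  simp only [sub_self, zero_mul] at hfin
  rw [Real.norm_eq_abs, abs_of_pos hg0] at hfin
  linarith
end

section
/- If T solves T'(s) = f(s)·max(0, (T_max - T(s))/(T_max - T_0))² on [0,S] with T(0) = T_0 < T_max and f continuous nonnegative, then T is nondecreasing and bounded above by T_max. -/
/-- Quadratic heating model (7): the solution is nondecreasing and bounded by `Tmax`. -/
theorem stmt_1 (T0 Tmax S : ℝ) (hT : T0 < Tmax) (hS : 0 < S)
    (f : ℝ → ℝ) (hf : ContinuousOn f (Set.Icc 0 S))
    (hf0 : ∀ s ∈ Set.Icc 0 S, 0 ≤ f s)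
    (T : ℝ → ℝ)
    (hode : ∀ s ∈ Set.Icc 0 S,
      HasDerivAt T (f s * (max 0 ((Tmax - T s) / (Tmax - T0))) ^ 2) s)
    (hinit : T 0 = T0) :
    MonotoneOn T (Set.Icc 0 S) ∧ ∀ s ∈ Set.Icc 0 S, T s ≤ Tmax := by
  have hcont : ContinuousOn T (Set.Icc 0 S) := fun x hx =>
    (hode x hx).continuousAt.continuousWithinAt
  have hmono : MonotoneOn T (Set.Icc 0 S) := by
    apply monotoneOn_of_deriv_nonneg (convex_Icc 0 S) hcont
    · intro x hx
      rw [interior_Icc] at hx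
      exact ((hode x (Set.mem_Icc_of_Ioo hx)).differentiableAt).differentiableWithinAt
    · intro x hx
      rw [interior_Icc] at hx
      have hx' := Set.mem_Icc_of_Ioo hx
      rw [(hode x hx').deriv]
      exact mul_nonneg (hf0 x hx') (sq_nonneg _)
  refine ⟨hmono, ?_⟩
  intro s hs
  by_contra hgt
  push_neg at hgt
  set A := Set.Icc 0 s ∩ T ⁻¹' Set.Iic Tmax with hA
  have hsub : Set.Icc 0 s ⊆ Set.Icc 0 S := Set.Icc_subset_Icc le_rfl hs.2
  have hAne : A.Nonempty := ⟨0, ⟨le_rfl, hs.1⟩, by simp [hinit, hT.le]⟩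
  have hAbdd : BddAbove A := ⟨s, fun x hx => hx.1.2⟩
  have hAclosed : IsClosed A :=
    (hcont.mono hsub).preimage_isClosed_of_isClosed isClosed_Icc isClosed_Iic
  obtain ⟨t0, ht0A, ht0ub⟩ : ∃ t0, t0 ∈ A ∧ ∀ x ∈ A, x ≤ t0 :=
    ⟨sSup A, hAclosed.csSup_mem hAne hAbdd, fun x hx => le_csSup hAbdd hx⟩
  have ht0le : t0 ≤ s := ht0A.1.2
  have ht0lt : t0 < s := lt_of_le_of_ne ht0le (by
    rintro rfl
    exact absurd ht0A.2 (not_le.mpr hgt))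
  have ht00 : 0 ≤ t0 := ht0A.1.1
  -- on (t0, s], T > Tmax, so derivative is zero there
  have hanti : AntitoneOn T (Set.Icc t0 s) := by
    apply antitoneOn_of_deriv_nonpos (convex_Icc t0 s)
    · exact hcont.mono (Set.Icc_subset_Icc ht00 hs.2)
    · intro x hx
      rw [interior_Icc] at hx
      have hxS : x ∈ Set.Icc 0 S := ⟨ht00.trans hx.1.le, hx.2.le.trans hs.2⟩
      exact ((hode x hxS).differentiableAt).differentiableWithinAt
    · intro x hx
      rw [interior_Icc] at hx
      have hxS : x ∈ Set.Icc 0 S := ⟨ht00.trans hx.1.le, hx.2.le.trans hs.2⟩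
      have hxnotA : x ∉ A := fun hmem => absurd (ht0ub x hmem) (not_le.mpr hx.1)
      have hTx : Tmax < T x := by
        by_contra h
        push_neg at h
        exact hxnotA ⟨⟨ht00.trans hx.1.le, hx.2.le⟩, h⟩
      have hmax : max 0 ((Tmax - T x) / (Tmax - T0)) = 0 :=
        max_eq_left (le_of_lt (div_neg_of_neg_of_pos (sub_neg.mpr hTx) (sub_pos.mpr hT)))
      rw [(hode x hxS).deriv, hmax]
      simp
  have := hanti ⟨le_rfl, ht0le⟩ ⟨ht0le, le_rfl⟩ ht0le
  exact absurd (hgt.trans_le (this.trans ht0A.2)) (lt_irrefl _)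
end

section
/- Let T solve the semi-discrete Dirichlet heat system with source: T_0' = T_N' = 0, T_0(0) = T_N(0) = T_s, and for 0 < k < N, T_k' = μ(τ)(T_{k-1} - 2T_k + T_{k+1}) + Q_k(τ) where μ(τ) > 0 and Q_k(τ) = q(τ)·max(0,(M - T_k)/(M - T_a))² with q ≥ 0 continuous, T_k(0) = T_a, T_s ≤ M, T_a < M. Then T_k(τ) ≤ M for all k and all τ ≥ 0 in the interval of existence. -/
open Topology Filter


/-- Discrete maximum principle for the semi-discrete Dirichlet system with
source (32): all temperatures stay below the fusion temperature `M`. -/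
theorem stmt_15 (N : ℕ) (hN : 2 ≤ N) (S M Ta Ts : ℝ) (hS : 0 < S)
    (hTa : Ta < M) (hTs : Ts ≤ M)
    (μ q : ℝ → ℝ) (hμ : ContinuousOn μ (Set.Icc 0 S))
    (hμpos : ∀ τ ∈ Set.Icc 0 S, 0 < μ τ)
    (hq : ContinuousOn q (Set.Icc 0 S)) (hq0 : ∀ τ ∈ Set.Icc 0 S, 0 ≤ q τ)
    (T : ℝ → ℕ → ℝ)
    (h0 : ∀ τ ∈ Set.Icc 0 S, HasDerivAt (fun σ => T σ 0) 0 τ)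
    (hNd : ∀ τ ∈ Set.Icc 0 S, HasDerivAt (fun σ => T σ N) 0 τ)
    (hbd : T 0 0 = Ts ∧ T 0 N = Ts)
    (hk : ∀ k, 0 < k → k < N → ∀ τ ∈ Set.Icc 0 S,
      HasDerivAt (fun σ => T σ k)
        (μ τ * (T τ (k - 1) - 2 * T τ k + T τ (k + 1)) +
          q τ * (max 0 ((M - T τ k) / (M - Ta))) ^ 2) τ)
    (hinit : ∀ k, 0 < k → k < N → T 0 k = Ta) :
    ∀ τ ∈ Set.Icc 0 S, ∀ k ≤ N, T τ k ≤ M := by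
  -- continuity of each component on [0,S]
  have hcont : ∀ k ≤ N, ContinuousOn (fun σ => T σ k) (Set.Icc 0 S) := by
    intro k hkN τ hτ
    rcases Nat.eq_zero_or_pos k with rfl | hk0
    · exact ((h0 τ hτ).continuousAt).continuousWithinAt
    rcases eq_or_lt_of_le hkN with rfl | hkN'
    · exact ((hNd τ hτ).continuousAt).continuousWithinAt
    · exact ((hk k hk0 hkN' τ hτ).continuousAt).continuousWithinAt
  -- boundary values are constant
  have hbc0 : ∀ τ ∈ Set.Icc 0 S, T τ 0 = Ts := by
    intro τ hτ
    have := constant_of_has_deriv_right_zero (f := fun σ => T σ 0)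
      (hcont 0 (Nat.zero_le N))
      (fun x hx => ((h0 x ⟨hx.1, hx.2.le⟩).hasDerivWithinAt)) τ hτ
    simpa [hbd.1] using this
  have hbcN : ∀ τ ∈ Set.Icc 0 S, T τ N = Ts := by
    intro τ hτ
    have := constant_of_has_deriv_right_zero (f := fun σ => T σ N)
      (hcont N le_rfl)
      (fun x hx => ((hNd x ⟨hx.1, hx.2.le⟩).hasDerivWithinAt)) τ hτ
    simpa [hbd.2] using this
  -- main epsilon estimate
  have main : ∀ ε > (0:ℝ), ∀ τ ∈ Set.Icc 0 S, ∀ k ≤ N, T τ k < M + ε * (1 + τ) := by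
    intro ε hε
    by_contra hcon
    push_neg at hcon
    obtain ⟨τ0, hτ0, k0, hk00, hge⟩ := hcon
    set A : Set ℝ := {τ | τ ∈ Set.Icc 0 S ∧ ∃ k ≤ N, M + ε * (1 + τ) ≤ T τ k} with hA
    have hAne : A.Nonempty := ⟨τ0, hτ0, k0, hk00, hge⟩
    have hAsub : A ⊆ Set.Icc 0 S := fun τ h => h.1
    -- A is closed
    have hAclosed : IsClosed A := by
      have : A = ⋃ k ∈ Finset.range (N + 1),
          (Set.Icc 0 S ∩ (fun τ => M + ε * (1 + τ) - T τ k) ⁻¹' Set.Iic 0) := by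
        ext τ
        simp only [hA, Set.mem_setOf_eq, Set.mem_iUnion, Finset.mem_range, Set.mem_inter_iff,
          Set.mem_preimage, Set.mem_Iic, Nat.lt_succ_iff]
        constructor
        · rintro ⟨hτ, k, hkN, hle⟩
          exact ⟨k, hkN, hτ, by linarith⟩
        · rintro ⟨k, hkN, hτ, hle⟩
          exact ⟨hτ, k, hkN, by linarith⟩
      rw [this]
      refine isClosed_biUnion_finset fun k hkmem => ?_
      have hkN : k ≤ N := Nat.lt_succ_iff.mp (Finset.mem_range.mp hkmem)
      have hgc : ContinuousOn (fun τ => M + ε * (1 + τ) - T τ k) (Set.Icc 0 S) := by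
        exact (continuousOn_const.add (continuousOn_const.mul
          (continuousOn_const.add continuousOn_id))).sub (hcont k hkN)
      exact hgc.preimage_isClosed_of_isClosed isClosed_Icc isClosed_Iic
    have hbdd : BddBelow A := ⟨0, fun τ h => (hAsub h).1⟩
    set t := sInf A with hts
    have htA : t ∈ A := hAclosed.csInf_mem hAne hbdd
    obtain ⟨htI, k, hkN, hle⟩ := htA
    have ht0 : 0 ≤ t := htI.1
    have hεt : 0 < ε * (1 + t) := by nlinarith
    -- t > 0
    have htpos : 0 < t := by
      rcases lt_or_eq_of_le ht0 with h | h
      · exact h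
      · exfalso
        rcases Nat.eq_zero_or_pos k with rfl | hk0
        · have := hbc0 0 (Set.left_mem_Icc.mpr hS.le)
          rw [← h] at hle; rw [← h] at hεt; rw [this] at hle; linarith
        rcases eq_or_lt_of_le hkN with rfl | hkN'
        · have := hbcN 0 (Set.left_mem_Icc.mpr hS.le)
          rw [← h] at hle; rw [← h] at hεt; rw [this] at hle; linarith
        · have := hinit k hk0 hkN'
          rw [← h] at hle; rw [← h] at hεt; rw [this] at hle; linarith
    -- k is interior
    have hk0 : 0 < k := by
      rcases Nat.eq_zero_or_pos k with rfl | h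
      · exfalso; rw [hbc0 t htI] at hle; linarith
      · exact h
    have hkN' : k < N := by
      rcases eq_or_lt_of_le hkN with rfl | h
      · exfalso; rw [hbcN t htI] at hle; linarith
      · exact h
    -- at time t, all components are ≤ M + ε(1+t)
    have hub : ∀ j, j ≤ N → T t j ≤ M + ε * (1 + t) := by
      intro j hjN
      have hcw : ContinuousWithinAt (fun σ => T σ j - (M + ε * (1 + σ))) (Set.Ico 0 t) t := by
        have h1 : ContinuousWithinAt (fun σ => T σ j) (Set.Icc 0 S) t := hcont j hjN t htI
        have h2 : ContinuousWithinAt (fun σ => T σ j - (M + ε * (1 + σ))) (Set.Icc 0 S) t :=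
          h1.sub (Continuous.continuousWithinAt (continuous_const.add (continuous_const.mul (continuous_const.add continuous_id))))
        exact h2.mono (fun σ hσ => ⟨hσ.1, hσ.2.le.trans htI.2⟩)
      have hne : (𝓝[Set.Ico 0 t] t).NeBot := by
        refine mem_closure_iff_nhdsWithin_neBot.mp ?_
        rw [closure_Ico (ne_of_lt htpos)]
        exact Set.right_mem_Icc.mpr ht0
      have hev : ∀ᶠ σ in 𝓝[Set.Ico 0 t] t, T σ j - (M + ε * (1 + σ)) ≤ 0 := by
        filter_upwards [self_mem_nhdsWithin] with σ hσ
        have hσS : σ ∈ Set.Icc 0 S := ⟨hσ.1, hσ.2.le.trans htI.2⟩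
        have hσA : σ ∉ A := fun hmem => absurd (csInf_le hbdd hmem) (not_le.mpr hσ.2)
        have : ¬ (M + ε * (1 + σ) ≤ T σ j) := by
          intro hcontra; exact hσA ⟨hσS, j, hjN, hcontra⟩
        linarith [not_le.mp this]
      have h' : T t j - (M + ε * (1 + t)) ≤ 0 := le_of_tendsto hcw hev
      linarith
    -- derivative at t
    set D := μ t * (T t (k - 1) - 2 * T t k + T t (k + 1)) +
        q t * (max 0 ((M - T t k) / (M - Ta))) ^ 2 with hD
    have hTtk : M + ε * (1 + t) ≤ T t k := hle
    have hsrc : (max 0 ((M - T t k) / (M - Ta))) = 0 := by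
      have hnum : M - T t k < 0 := by linarith
      have hden : 0 < M - Ta := by linarith
      have : (M - T t k) / (M - Ta) ≤ 0 := le_of_lt (div_neg_of_neg_of_pos hnum hden)
      exact max_eq_left this
    have hDle : D ≤ 0 := by
      have h1 : T t (k - 1) ≤ T t k :=
        le_trans (hub (k - 1) (le_trans (Nat.sub_le k 1) hkN)) hTtk
      have h2 : T t (k + 1) ≤ T t k := le_trans (hub (k + 1) hkN') hTtk
      have hμt : 0 < μ t := hμpos t htI
      rw [hD, hsrc]
      have : T t (k - 1) - 2 * T t k + T t (k + 1) ≤ 0 := by linarith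
      nlinarith
    -- g has derivative D - ε at t, g t = 0, g < 0 just before t : contradiction
    have hgd : HasDerivAt (fun σ => T σ k - (M + ε * (1 + σ))) (D - ε) t := by
      have h1 := hk k hk0 hkN' t htI
      have h2 : HasDerivAt (fun σ => M + ε * (1 + σ)) ε t := by
        have : HasDerivAt (fun σ : ℝ => M + ε * (1 + σ)) (ε * 1) t :=
          (((hasDerivAt_id t).const_add (1:ℝ)).const_mul ε).const_add M
        simpa using this
      exact h1.sub h2
    have hgt0 : T t k - (M + ε * (1 + t)) = 0 := le_antisymm (by linarith [hub k hkN]) (by linarith)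
    rw [hasDerivAt_iff_tendsto_slope] at hgd
    have hneg : D - ε < 0 := by linarith
    have hev1 : ∀ᶠ σ in 𝓝[≠] t, slope (fun σ => T σ k - (M + ε * (1 + σ))) t σ < 0 :=
      hgd.eventually (eventually_lt_nhds hneg)
    have hev2 : ∀ᶠ σ in 𝓝[<] t, slope (fun σ => T σ k - (M + ε * (1 + σ))) t σ < 0 :=
      hev1.filter_mono (nhdsWithin_mono t fun σ hσ => ne_of_lt hσ)
    have hev3 : ∀ᶠ σ in 𝓝[<] t, σ ∈ Set.Ioo 0 t :=
      eventually_of_mem (Ioo_mem_nhdsLT_of_mem ⟨htpos, le_refl t⟩) (fun σ hσ => hσ)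
    obtain ⟨σ, hσs, hσmem⟩ := (hev2.and hev3).exists
    have hσt : σ - t < 0 := by linarith [hσmem.2]
    have hslope : slope (fun σ => T σ k - (M + ε * (1 + σ))) t σ
        = (T σ k - (M + ε * (1 + σ))) / (σ - t) := by
      rw [slope_def_field]; rw [hgt0]; ring_nf
    rw [hslope] at hσs
    have hgσ : 0 < T σ k - (M + ε * (1 + σ)) := by
      rcases (div_neg_iff.mp hσs) with ⟨h1, h2⟩ | ⟨h1, h2⟩
      · linarith
      · linarith
    have hσS : σ ∈ Set.Icc 0 S := ⟨hσmem.1.le, hσmem.2.le.trans htI.2⟩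
    have hσA : σ ∈ A := ⟨hσS, k, hkN, by linarith⟩
    exact absurd (csInf_le hbdd hσA) (not_le.mpr hσmem.2)
  -- conclude
  intro τ hτ k hkN
  by_contra hcontra
  push_neg at hcontra
  have hτ1 : (0:ℝ) < 1 + τ := by linarith [hτ.1]
  have hεp : 0 < (T τ k - M) / (1 + τ) := div_pos (by linarith) hτ1
  have := main _ hεp τ hτ k hkN
  rw [div_mul_cancel₀ _ (ne_of_gt hτ1)] at this
  linarith
end
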